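/- Let G be a finite group, P a G-poset with an initial object x₀, and ρ : P⋊G → C a category extension; give C the atomic topology. Then a presheaf of sets on C is a sheaf for the atomic topology if and only if it is isomorphic to the fixed-point presheaf F_M for some right G-set M. -/

import Mathlib

open CategoryTheory

/-! ## Basic site-theoretic notions -/

/-- The Ore condition: any cospan can be completed to a commutative square. -/
def OreCondition (C : Type*) [Category C] : Prop :=
  ∀ ⦃x y z : C⦄ (f : y ⟶ x) (g : z ⟶ x),
    ∃ (w : C) (p : w ⟶ y) (q : w ⟶ z), p ≫ f = q ≫ g

/-- A Grothendieck topology is the atomic topology iff its covering sieves are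
exactly the nonempty sieves. -/
def IsAtomicTopology {C : Type*} [Category C] (J : GrothendieckTopology C) : Prop :=
  ∀ (x : C) (S : Sieve x), S ∈ J x ↔ ∃ (y : C) (f : y ⟶ x), S f

/-- The presieve on `c` consisting of all morphisms with domain `c₀`. -/
def domPresieve {C : Type*} [Category C] (c₀ : C) (c : C) : Presieve c :=
  fun Y => {_f | Y = c₀}

/-! ## Right `G`-sets and the orbit category -/

/-- The category of right `G`-sets, realized as presheaves of sets on the
one-object category of `G`. -/
abbrev GSet (G : Type) [Group G] := (SingleObj G)ᵒᵖ ⥤ Type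

variable {G : Type} [Group G]

/-- The right coset space `H\G` as a right `G`-set (`G` acting by right
multiplication). -/
def cosetGSet (H : Subgroup G) : GSet G where
  obj _ := Quotient (QuotientGroup.rightRel H)
  map f := TypeCat.ofHom (Quotient.map' (fun x => x * f.unop)
    (fun a b hab => by
      rw [QuotientGroup.rightRel_apply] at hab ⊢
      rw [mul_inv_rev, ← mul_assoc, mul_inv_cancel_right]
      exact hab))
  map_id _ := by
    ext q
    induction q using Quotient.inductionOn' with
    | h a => exact congrArg (Quotient.mk _) (mul_one a)
  map_comp f g := by
    ext q
    induction q using Quotient.inductionOn' with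
    | h a => exact congrArg (Quotient.mk _) (mul_assoc a f.unop g.unop).symm

/-- The orbit category `O(G)`: the full subcategory of right `G`-sets on the
coset spaces `H\G`, indexed by the subgroups of `G`. -/
abbrev OrbitCat (G : Type) [Group G] := InducedCategory (GSet G) (cosetGSet (G := G))

/-- For `a ∈ G`, the `G`-map `c_a : 1\G → 1\G`, `k ↦ a * k`. -/
def botAuto (a : G) : cosetGSet (⊥ : Subgroup G) ⟶ cosetGSet (⊥ : Subgroup G) where
  app _ := TypeCat.ofHom (Quotient.map' (fun k => a * k)
    (fun x y hxy => by
      rw [QuotientGroup.rightRel_apply] at hxy ⊢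
      simp only [Subgroup.mem_bot] at hxy ⊢
      rw [mul_inv_rev, ← mul_assoc, mul_assoc a, hxy]
      simp))
  naturality X Y f := by
    ext q
    induction q using Quotient.inductionOn' with
    | h k => exact congrArg (Quotient.mk _) (mul_assoc a k f.unop).symm

/-- The functor from the one-object category of `G` to the orbit category with
value `1\G`, sending `a` to `c_a`; it makes `F(1\G)` a right `G`-set for any
presheaf `F` on the orbit category. -/
def orbitBotIota (G : Type) [Group G] : SingleObj G ⥤ OrbitCat G where
  obj _ := (⊥ : Subgroup G)
  map a := ⟨botAuto a⟩
  map_id _ := by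
    apply InducedCategory.hom_ext
    apply NatTrans.ext
    funext X
    ext q
    induction q using Quotient.inductionOn' with
    | h k => exact congrArg (Quotient.mk _) (one_mul k)
  map_comp {x y z} a b := by
    apply InducedCategory.hom_ext
    apply NatTrans.ext
    funext X
    ext q
    induction q using Quotient.inductionOn' with
    | h k => exact congrArg (Quotient.mk _) (mul_assoc b a k)

/-! ## The transporter category of a `G`-poset -/

/-- The transporter category `P ⋊ G` of a `G`-poset `P`: objects are those of
`P`, and morphisms `x ⟶ y` are elements `g ∈ G` with `g • x ≤ y`. -/
@[ext] structure Transporter (G : Type) (P : Type) where pt : P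

instance Transporter.category (G P : Type) [Group G] [PartialOrder P] [MulAction G P]
    [CovariantClass G P (· • ·) (· ≤ ·)] : Category (Transporter G P) where
  Hom x y := { g : G // g • x.pt ≤ y.pt }
  id x := ⟨1, by simp⟩
  comp {x y z} f g := ⟨g.1 * f.1, by
    rw [mul_smul]
    exact le_trans (CovariantClass.elim g.1 f.2) g.2⟩
  id_comp f := Subtype.ext (mul_one _)
  comp_id f := Subtype.ext (one_mul _)
  assoc f g h := Subtype.ext (mul_assoc h.1 g.1 f.1).symm

variable {P : Type} [PartialOrder P] [MulAction G P]
    [CovariantClass G P (· • ·) (· ≤ ·)]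

theorem smul_le_smul_act (g : G) {a b : P} (h : a ≤ b) : g • a ≤ g • b :=
  CovariantClass.elim g h

/-- An initial (i.e. bottom) element of a `G`-poset is fixed by `G`. -/
theorem smul_bot_eq {x₀ : P} (hbot : ∀ x : P, x₀ ≤ x) (g : G) : g • x₀ = x₀ :=
  le_antisymm (by simpa using smul_le_smul_act g (hbot (g⁻¹ • x₀))) (hbot _)

/-- The endomorphism `(g, id)` of the initial object `x₀` of `P ⋊ G`. -/
def gmor {x₀ : P} (hbot : ∀ x : P, x₀ ≤ x) (g : G) :
    (⟨x₀⟩ : Transporter G P) ⟶ (⟨x₀⟩ : Transporter G P) :=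
  ⟨g, le_of_eq (smul_bot_eq hbot g)⟩

theorem gmor_comp {x₀ : P} (hbot : ∀ x : P, x₀ ≤ x) (a b : G) :
    gmor (G := G) hbot b ≫ gmor hbot a = gmor hbot (a * b) := rfl

theorem gmor_one {x₀ : P} (hbot : ∀ x : P, x₀ ≤ x) :
    gmor (G := G) hbot (1 : G) = 𝟙 (⟨x₀⟩ : Transporter G P) := rfl

/-- The projection functor `π : P ⋊ G ⥤ G`. -/
def piFunctor (G P : Type) [Group G] [PartialOrder P] [MulAction G P]
    [CovariantClass G P (· • ·) (· ≤ ·)] : Transporter G P ⥤ SingleObj G where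
  obj _ := SingleObj.star G
  map f := f.1
  map_id _ := rfl
  map_comp _ _ := rfl

/-! ## Quotients of transporter categories and fixed-point presheaves -/

variable {C : Type} [SmallCategory C]

section
variable (ρ : Transporter G P ⥤ C) {x₀ : P} (hbot : ∀ x : P, x₀ ≤ x)

/-- `Hom_C(x₀, c)` as a right `G`-set, with `f · g := ρ(g, id) ≫ f`. -/
def homGSet (c : C) : GSet G where
  obj _ := (ρ.obj ⟨x₀⟩ ⟶ c)
  map f := TypeCat.ofHom fun φ => ρ.map (gmor hbot f.unop) ≫ φ
  map_id _ := by
    ext φ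
    show ρ.map (gmor hbot (1 : G)) ≫ φ = φ
    rw [gmor_one, ρ.map_id, Category.id_comp]
  map_comp {X Y Z} f g := by
    ext φ
    show ρ.map (gmor hbot (f.unop * g.unop)) ≫ φ =
      ρ.map (gmor hbot g.unop) ≫ ρ.map (gmor hbot f.unop) ≫ φ
    rw [← gmor_comp, ρ.map_comp, Category.assoc]

/-- Postcomposition `Hom_C(x₀, c) → Hom_C(x₀, c')` with `φ : c ⟶ c'`, as a map
of right `G`-sets. -/
def homGSetMap {c c' : C} (φ : c ⟶ c') : homGSet ρ hbot c ⟶ homGSet ρ hbot c' where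
  app _ := TypeCat.ofHom fun f => (show ρ.obj ⟨x₀⟩ ⟶ c from f) ≫ φ
  naturality X Y f := by
    ext ψ
    show (ρ.map (gmor hbot f.unop) ≫ (show ρ.obj ⟨x₀⟩ ⟶ c from ψ)) ≫ φ =
      ρ.map (gmor hbot f.unop) ≫ ((show ρ.obj ⟨x₀⟩ ⟶ c from ψ) ≫ φ)
    exact Category.assoc _ _ _

theorem homGSetMap_id (c : C) : homGSetMap ρ hbot (𝟙 c) = 𝟙 (homGSet ρ hbot c) := by
  apply NatTrans.ext
  funext X
  ext f
  exact Category.comp_id f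

theorem homGSetMap_comp {c c' c'' : C} (φ : c ⟶ c') (ψ : c' ⟶ c'') :
    homGSetMap ρ hbot (φ ≫ ψ) = homGSetMap ρ hbot φ ≫ homGSetMap ρ hbot ψ := by
  apply NatTrans.ext
  funext X
  ext f
  exact (Category.assoc _ _ _).symm

/-- The fixed-point presheaf `F_M : x ↦ Hom_{G-Set}(Hom_C(x₀, x), M)` on `C`. -/
def fixedPointPresheaf (M : GSet G) : Cᵒᵖ ⥤ Type where
  obj c := homGSet ρ hbot c.unop ⟶ M
  map {c c'} ψ := TypeCat.ofHom fun η => homGSetMap ρ hbot ψ.unop ≫ η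
  map_id c := by
    refine TypeCat.homEquiv.injective (funext fun η => ?_)
    show homGSetMap ρ hbot (𝟙 c.unop) ≫ η = η
    rw [homGSetMap_id, Category.id_comp]
  map_comp {c c' c''} ψ ψ' := by
    refine TypeCat.homEquiv.injective (funext fun η => ?_)
    show homGSetMap ρ hbot (ψ'.unop ≫ ψ.unop) ≫ η = _
    rw [homGSetMap_comp, Category.assoc]
    rfl

/-- The right `G`-set `𝔊(x₀)` attached to a presheaf `𝔊` on `C`: `g ∈ G`
acts as `𝔊(ρ(g, id))`. -/
def evalGSet (𝔊 : Cᵒᵖ ⥤ Type) : GSet G where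
  obj _ := 𝔊.obj (Opposite.op (ρ.obj ⟨x₀⟩))
  map f := 𝔊.map (ρ.map (gmor hbot f.unop)).op
  map_id _ := by
    show 𝔊.map (ρ.map (gmor hbot (1 : G))).op = _
    rw [gmor_one, ρ.map_id]
    exact 𝔊.map_id _
  map_comp {X Y Z} f g := by
    show 𝔊.map (ρ.map (gmor hbot (f.unop * g.unop))).op = _
    rw [← gmor_comp, ρ.map_comp, op_comp, 𝔊.map_comp]

end

/-- `ρ : P⋊G ⥤ C` is a category extension: it is bijective on objects,
surjective on morphism sets, the kernel groups `K(y)` act freely by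
postcomposition on hom sets, and `ρ` exactly identifies the `K(y)`-orbits of
morphisms, i.e. `K(y)\Hom(x, y) ≅ Hom_C(ρx, ρy)`. -/
structure IsCatExtension (ρ : Transporter G P ⥤ C) : Prop where
  bij_obj : Function.Bijective ρ.obj
  surj_map : ∀ {x y : Transporter G P} (f : ρ.obj x ⟶ ρ.obj y), ∃ u : x ⟶ y, ρ.map u = f
  free : ∀ {y : Transporter G P} (α : y ⟶ y), ρ.map α = 𝟙 (ρ.obj y) →
    ∀ {x : Transporter G P} (u : x ⟶ y), u ≫ α = u → α = 𝟙 y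
  fiber : ∀ {x y : Transporter G P} (u u' : x ⟶ y),
    ρ.map u = ρ.map u' ↔ ∃ α : y ⟶ y, ρ.map α = 𝟙 (ρ.obj y) ∧ u ≫ α = u'

/-! ## The transporter category `T(G)` on subgroups -/

/-- The transporter category `T(G)`: objects are the subgroups of `G`,
morphisms `H ⟶ K` are elements `g ∈ G` with `gHg⁻¹ ≤ K`. -/
@[ext] structure TransporterCat (G : Type) [Group G] where sub : Subgroup G

instance TransporterCat.category (G : Type) [Group G] : Category (TransporterCat G) where
  Hom H K := { g : G // ∀ h ∈ H.sub, g * h * g⁻¹ ∈ K.sub }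
  id H := ⟨1, fun h hh => by simpa using hh⟩
  comp {H K L} f g := ⟨g.1 * f.1, fun h hh => by
    have hmem := g.2 _ (f.2 h hh)
    have heq : g.1 * (f.1 * h * f.1⁻¹) * g.1⁻¹ = (g.1 * f.1) * h * (g.1 * f.1)⁻¹ := by group
    rwa [heq] at hmem⟩
  id_comp f := Subtype.ext (mul_one _)
  comp_id f := Subtype.ext (one_mul _)
  assoc f g h := Subtype.ext (mul_assoc h.1 g.1 f.1).symm

/-- The conjugate subgroup `gHg⁻¹`. -/
def conjSubgroup (g : G) (H : Subgroup G) : Subgroup G :=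
  H.map (MulAut.conj g).toMonoidHom

lemma conjSubgroup_inv_mem {g : G} {H : Subgroup G} {w : G}
    (hw : w ∈ conjSubgroup g H) : g⁻¹ * w * g⁻¹⁻¹ ∈ H := by
  obtain ⟨h, hh, rfl⟩ := hw
  have : g⁻¹ * ((MulAut.conj g).toMonoidHom h) * g⁻¹⁻¹ = h := by
    simp [MulAut.conj_apply]; group
  rwa [this]

/-- The `G`-map `H\G → K\G`, `Hk ↦ Kgk`, attached to `g ∈ G` with `gHg⁻¹ ≤ K`. -/
def transToOrbit {H K : Subgroup G} (g : { g : G // ∀ h ∈ H, g * h * g⁻¹ ∈ K }) :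
    cosetGSet H ⟶ cosetGSet K where
  app _ := TypeCat.ofHom (Quotient.map' (fun k => g.1 * k)
    (fun a b hab => by
      rw [QuotientGroup.rightRel_apply] at hab ⊢
      have := g.2 _ hab
      have heq : g.1 * (b * a⁻¹) * g.1⁻¹ = (g.1 * b) * (g.1 * a)⁻¹ := by group
      rwa [heq] at this))
  naturality X Y f := by
    ext q
    induction q using Quotient.inductionOn' with
    | h k => exact congrArg (Quotient.mk _) (mul_assoc g.1 k f.unop).symm

/-- The setoid on `{g : G // gHg⁻¹ ≤ K}` whose classes are right cosets `Kg`. -/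
def transSetoid (H K : Subgroup G) : Setoid { g : G // ∀ h ∈ H, g * h * g⁻¹ ∈ K } where
  r a b := a.1 * b.1⁻¹ ∈ K
  iseqv := by
    constructor
    · intro a; simpa using K.one_mem
    · intro a b h
      simpa using K.inv_mem h
    · intro a b c h1 h2
      have := K.mul_mem h1 h2
      simpa [mul_assoc] using this

/-! ## The coset space `H\G` as a discrete `G`-poset -/

/-- The coset space `H\G` as a discretely ordered `G`-poset, with `g` acting
by `Hk ↦ Hkg⁻¹`. -/
def CosetPoset (G : Type) [Group G] (H : Subgroup G) :=
  Quotient (QuotientGroup.rightRel H)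

instance (H : Subgroup G) : PartialOrder (CosetPoset G H) where
  le x y := x = y
  le_refl _ := rfl
  le_trans _ _ _ h h' := Eq.trans h h'
  le_antisymm _ _ h _ := h

instance (H : Subgroup G) : MulAction G (CosetPoset G H) where
  smul g := Quotient.map' (fun k => k * g⁻¹)
    (fun a b hab => by
      rw [QuotientGroup.rightRel_apply] at hab ⊢
      simpa [mul_assoc] using hab)
  one_smul q := by
    induction q using Quotient.inductionOn' with
    | h k => exact congrArg (Quotient.mk _) (by simp)
  mul_smul a b q := by
    induction q using Quotient.inductionOn' with
    | h k => exact congrArg (Quotient.mk _) (by simp [mul_assoc])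

instance (H : Subgroup G) : CovariantClass G (CosetPoset G H) (· • ·) (· ≤ ·) where
  elim g x y h := le_of_eq (congrArg (g • ·) (le_antisymm h (Eq.symm h : y ≤ x)))

/-! ## Underlying `G`-set of a right `RG`-module -/

/-- The underlying right `G`-set of a right `RG`-module. -/
noncomputable def UGSet (R : Type) [CommRing R]
    (M : ModuleCat (MonoidAlgebra R G)ᵐᵒᵖ) : GSet G where
  obj _ := M
  map f := TypeCat.ofHom fun m => (MulOpposite.op (MonoidAlgebra.single f.unop (1 : R))) • m
  map_id _ := by
    ext m
    show (MulOpposite.op (MonoidAlgebra.single (1 : G) (1 : R))) • m = m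
    rw [← MonoidAlgebra.one_def, MulOpposite.op_one, one_smul]
  map_comp {X Y Z} f g := by
    ext m
    show (MulOpposite.op (MonoidAlgebra.single (f.unop * g.unop) (1 : R))) • m =
      (MulOpposite.op (MonoidAlgebra.single g.unop (1 : R))) •
        ((MulOpposite.op (MonoidAlgebra.single f.unop (1 : R))) • m)
    rw [smul_smul, ← MulOpposite.op_mul, MonoidAlgebra.single_mul_single, one_mul]




/-! ## Auxiliary lemmas for the main theorem -/

section MainAux

variable {G : Type} [Group G] {P : Type} [PartialOrder P] [MulAction G P]
    [CovariantClass G P (· • ·) (· ≤ ·)] {C : Type} [SmallCategory C]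
    {x₀ : P}

/-- Any object admitting a morphism to `⟨x₀⟩` in the transporter category is `⟨x₀⟩`. -/
lemma aux_dom_eq (hbot : ∀ x : P, x₀ ≤ x) {w : Transporter G P}
    (v : w ⟶ (⟨x₀⟩ : Transporter G P)) : w = ⟨x₀⟩ := by
  ext
  have h1 : v.1 • w.pt = x₀ := le_antisymm v.2 (hbot _)
  calc w.pt = v.1⁻¹ • (v.1 • w.pt) := (inv_smul_smul _ _).symm
    _ = v.1⁻¹ • x₀ := by rw [h1]
    _ = x₀ := smul_bot_eq hbot _

/-- The canonical morphism `⟨x₀⟩ ⟶ z` in the transporter category. -/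
def iotaMor (hbot : ∀ x : P, x₀ ≤ x) (z : Transporter G P) :
    (⟨x₀⟩ : Transporter G P) ⟶ z :=
  ⟨1, by rw [one_smul]; exact hbot _⟩

/-- Transitivity: any two morphisms out of `ρ⟨x₀⟩` differ by the `G`-action. -/
lemma aux_trans (ρ : Transporter G P ⥤ C) (hρ : IsCatExtension ρ)
    (hbot : ∀ x : P, x₀ ≤ x) {c : C}
    (φ ψ : ρ.obj (⟨x₀⟩ : Transporter G P) ⟶ c) :
    ∃ a : G, φ = ρ.map (gmor hbot a) ≫ ψ := by
  obtain ⟨z, rfl⟩ := hρ.bij_obj.2 c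
  obtain ⟨v, rfl⟩ := hρ.surj_map φ
  obtain ⟨w, rfl⟩ := hρ.surj_map ψ
  refine ⟨w.1⁻¹ * v.1, ?_⟩
  rw [← ρ.map_comp]
  congr 1
  apply Subtype.ext
  show v.1 = w.1 * (w.1⁻¹ * v.1)
  rw [mul_inv_cancel_left]

/-- Key well-definedness lemma: a `G`-map `u : Hom(x₀, c) → 𝔊(x₀)` gives
consistent values along equal composites. -/
lemma aux_keyWD (ρ : Transporter G P ⥤ C) (hρ : IsCatExtension ρ)
    (hbot : ∀ x : P, x₀ ≤ x) (𝔊 : Cᵒᵖ ⥤ Type) {c : C}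
    (u : homGSet ρ hbot c ⟶ evalGSet ρ hbot 𝔊)
    {z : C} (p p' : z ⟶ ρ.obj (⟨x₀⟩ : Transporter G P))
    (h h' : ρ.obj (⟨x₀⟩ : Transporter G P) ⟶ c)
    (hcomm : p ≫ h = p' ≫ h') :
    𝔊.map p.op (u.app (Opposite.op (SingleObj.star G)) h)
      = 𝔊.map p'.op (u.app (Opposite.op (SingleObj.star G)) h') := by
  obtain ⟨w, rfl⟩ := hρ.bij_obj.2 z
  obtain ⟨v, rfl⟩ := hρ.surj_map p
  obtain ⟨v', rfl⟩ := hρ.surj_map p'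
  obtain rfl : w = ⟨x₀⟩ := aux_dom_eq hbot v
  have hnat : ∀ (a : G) (ψ : ρ.obj (⟨x₀⟩ : Transporter G P) ⟶ c),
      u.app (Opposite.op (SingleObj.star G)) (ρ.map (gmor hbot a) ≫ ψ)
        = 𝔊.map (ρ.map (gmor hbot a)).op (u.app (Opposite.op (SingleObj.star G)) ψ) :=
    fun a ψ => types_congr_hom
      (u.naturality ((show SingleObj.star G ⟶ SingleObj.star G from a).op)) ψ
  have hv : v = gmor hbot v.1 := Subtype.ext rfl
  have hv' : v' = gmor hbot v'.1 := Subtype.ext rfl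
  rw [hv] at hcomm ⊢
  rw [hv'] at hcomm ⊢
  rw [← hnat, ← hnat, hcomm]

/-- The fixed-point presheaf is a sheaf for the atomic topology. -/
lemma fixedPoint_isSheaf (ρ : Transporter G P ⥤ C) (hρ : IsCatExtension ρ)
    (hbot : ∀ x : P, x₀ ≤ x) (J : GrothendieckTopology C) (hJ : IsAtomicTopology J)
    (M : GSet G) : Presieve.IsSheaf J (fixedPointPresheaf ρ hbot M) := by
  intro c S hS
  have hall : ∀ φ : ρ.obj (⟨x₀⟩ : Transporter G P) ⟶ c, S φ := by
    obtain ⟨y, f, hf⟩ := (hJ c S).1 hS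
    obtain ⟨w, rfl⟩ := hρ.bij_obj.2 y
    have hf' : S (ρ.map (iotaMor hbot w) ≫ f) := S.downward_closed hf _
    intro φ
    obtain ⟨a, ha⟩ := aux_trans ρ hρ hbot φ (ρ.map (iotaMor hbot w) ≫ f)
    rw [ha]
    exact S.downward_closed hf' _
  intro x hx
  have hx' := (Presieve.compatible_iff_sieveCompatible x).1 hx
  refine ⟨{ app := fun X => TypeCat.ofHom fun φ => (x φ (hall φ)).app X (𝟙 _), naturality := ?_ }, ?_, ?_⟩
  · intro X Y f
    ext φ
    show (x (ρ.map (gmor hbot f.unop) ≫ φ) (hall _)).app Y (𝟙 _)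
      = M.map f ((x φ (hall φ)).app X (𝟙 _))
    have h1 : x (ρ.map (gmor hbot f.unop) ≫ φ) (hall _)
        = (fixedPointPresheaf ρ hbot M).map (ρ.map (gmor hbot f.unop)).op (x φ (hall φ)) :=
      hx' φ (ρ.map (gmor hbot f.unop)) (hall φ)
    rw [h1]
    have h2 : (x φ (hall φ)).app Y (ρ.map (gmor hbot f.unop) ≫ 𝟙 _)
        = M.map f ((x φ (hall φ)).app X (𝟙 _)) :=
      types_congr_hom ((x φ (hall φ)).naturality f) (𝟙 _)
    rw [Category.comp_id] at h2
    rw [← h2]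
    show (x φ (hall φ)).app Y (𝟙 _ ≫ ρ.map (gmor hbot f.unop)) = _
    rw [Category.id_comp]
  · intro y f hf
    apply NatTrans.ext
    funext X
    ext ψ
    show (x (ψ ≫ f) (hall _)).app X (𝟙 _) = (x f hf).app X ψ
    have h1 : x (ψ ≫ f) (hall _)
        = (fixedPointPresheaf ρ hbot M).map ψ.op (x f hf) := hx' f ψ hf
    rw [h1]
    show (x f hf).app X (𝟙 _ ≫ ψ) = (x f hf).app X ψ
    exact congrArg (fun a => (x f hf).app X a) (Category.id_comp (show ρ.obj ⟨x₀⟩ ⟶ y from ψ))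
  · intro t ht
    apply NatTrans.ext
    funext X
    ext φ
    have h3 : t.app X (𝟙 _ ≫ φ) = (x φ (hall φ)).app X (𝟙 _) :=
      types_congr_hom (congrArg (fun ν => ν.app X) (ht φ (hall φ))) (𝟙 _)
    replace h3 := (congrArg (fun a => t.app X a) (Category.id_comp (show ρ.obj ⟨x₀⟩ ⟶ c from φ))).symm.trans h3
    exact h3

/-- The comparison map `𝔊 ⟶ F_{𝔊(x₀)}`. -/
def thetaTrans (ρ : Transporter G P ⥤ C) (hbot : ∀ x : P, x₀ ≤ x) (𝔊 : Cᵒᵖ ⥤ Type) :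
    𝔊 ⟶ fixedPointPresheaf ρ hbot (evalGSet ρ hbot 𝔊) where
  app c := TypeCat.ofHom fun s => show homGSet ρ hbot c.unop ⟶ evalGSet ρ hbot 𝔊 from
  { app := fun _X => TypeCat.ofHom fun φ => 𝔊.map φ.op s
    naturality := fun X Y f => by
      ext φ
      show 𝔊.map (ρ.map (gmor hbot f.unop) ≫ φ).op s
        = 𝔊.map (ρ.map (gmor hbot f.unop)).op (𝔊.map φ.op s)
      erw [op_comp, FunctorToTypes.map_comp_apply] }
  naturality X Y f := by
    ext s
    apply NatTrans.ext
    funext Xo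
    ext φ
    show 𝔊.map φ.op (𝔊.map f s) = 𝔊.map (φ ≫ f.unop).op s
    erw [op_comp, Quiver.Hom.op_unop, FunctorToTypes.map_comp_apply]
    rfl

end MainAux

/-- For a category extension `ρ : P⋊G ⥤ C` with the atomic topology on `C`, a
presheaf of sets on `C` is a sheaf iff it is isomorphic to a fixed-point presheaf
`F_M` for some right `G`-set `M`. -/
theorem isSheaf_iff_fixedPoint (G : Type) [Group G] [Finite G] (P : Type) [PartialOrder P]
    [MulAction G P] [CovariantClass G P (· • ·) (· ≤ ·)]
    (x₀ : P) (hbot : ∀ x : P, x₀ ≤ x)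
    (C : Type) [SmallCategory C] (ρ : Transporter G P ⥤ C) (hρ : IsCatExtension ρ)
    (J : GrothendieckTopology C) (hJ : IsAtomicTopology J) (𝔊 : Cᵒᵖ ⥤ Type) :
    Presieve.IsSheaf J 𝔊 ↔
      ∃ M : GSet G, Nonempty (𝔊 ≅ fixedPointPresheaf ρ hbot M) := by
  constructor
  · intro hsheaf
    refine ⟨evalGSet ρ hbot 𝔊, ⟨?_⟩⟩
    have hbij : ∀ c : C, Function.Bijective ((thetaTrans ρ hbot 𝔊).app (Opposite.op c)) := by
      intro c
      obtain ⟨z, rfl⟩ := hρ.bij_obj.2 c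
      set φc : ρ.obj (⟨x₀⟩ : Transporter G P) ⟶ ρ.obj z := ρ.map (iotaMor hbot z) with hφc
      have hmemc : (Sieve.generate (Presieve.singleton φc)).arrows φc :=
        ⟨_, 𝟙 _, φc, Presieve.singleton.mk, Category.id_comp _⟩
      have hScov : Sieve.generate (Presieve.singleton φc) ∈ J (ρ.obj z) :=
        (hJ _ _).2 ⟨_, φc, hmemc⟩
      have hsh := hsheaf _ hScov
      constructor
      · intro s t hst
        have hev : ∀ φ : ρ.obj (⟨x₀⟩ : Transporter G P) ⟶ ρ.obj z,
            𝔊.map φ.op s = 𝔊.map φ.op t := fun φ =>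
          types_congr_hom (congrArg (fun ν => ν.app (Opposite.op (SingleObj.star G))) hst) φ
        refine hsh.isSeparatedFor.ext ?_
        rintro Y f ⟨W, g, h, hsing, rfl⟩
        cases hsing
        rw [op_comp, FunctorToTypes.map_comp_apply, FunctorToTypes.map_comp_apply, hev φc]
      · intro u
        change homGSet ρ hbot (ρ.obj z) ⟶ evalGSet ρ hbot 𝔊 at u
        have hfac : ∀ {Y : C} {f : Y ⟶ ρ.obj z},
            (Sieve.generate (Presieve.singleton φc)).arrows f →
            ∃ g : Y ⟶ ρ.obj (⟨x₀⟩ : Transporter G P), g ≫ φc = f := by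
          rintro Y f ⟨W, g, h, hsing, rfl⟩
          cases hsing
          exact ⟨g, rfl⟩
        let xfam : Presieve.FamilyOfElements 𝔊
            ((Sieve.generate (Presieve.singleton φc)) : Presieve (ρ.obj z)) :=
          fun Y f hf => 𝔊.map (hfac hf).choose.op (u.app (Opposite.op (SingleObj.star G)) φc)
        have hcompat : xfam.Compatible := by
          intro Y₁ Y₂ Z g₁ g₂ f₁ f₂ h₁ h₂ hcomm
          show 𝔊.map g₁.op (𝔊.map (hfac h₁).choose.op _)
            = 𝔊.map g₂.op (𝔊.map (hfac h₂).choose.op _)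
          erw [← FunctorToTypes.map_comp_apply, ← FunctorToTypes.map_comp_apply,
            ← op_comp, ← op_comp]
          apply aux_keyWD ρ hρ hbot 𝔊 u
          rw [Category.assoc, Category.assoc, (hfac h₁).choose_spec, (hfac h₂).choose_spec, hcomm]
        obtain ⟨t, ht, -⟩ := hsh xfam hcompat
        refine ⟨t, ?_⟩
        have hφct : 𝔊.map φc.op t = u.app (Opposite.op (SingleObj.star G)) φc := by
          have h1 := ht φc hmemc
          rw [h1]
          have h4 := aux_keyWD ρ hρ hbot 𝔊 u (hfac hmemc).choose (𝟙 _) φc φc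
            (by rw [(hfac hmemc).choose_spec, Category.id_comp])
          show 𝔊.map (hfac hmemc).choose.op (u.app (Opposite.op (SingleObj.star G)) φc) = _
          erw [h4, op_id, FunctorToTypes.map_id_apply]
        apply NatTrans.ext
        funext X
        ext φ
        show 𝔊.map φ.op t = u.app X φ
        obtain ⟨a, rfl⟩ := aux_trans ρ hρ hbot φ φc
        rw [op_comp, FunctorToTypes.map_comp_apply, hφct]
        exact (types_congr_hom (u.naturality ((show SingleObj.star G ⟶ SingleObj.star G from a).op))
          φc).symm
    haveI : ∀ X : Cᵒᵖ, IsIso ((thetaTrans ρ hbot 𝔊).app X) := fun X =>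
      (isIso_iff_bijective _).2 (hbij X.unop)
    haveI : IsIso (thetaTrans ρ hbot 𝔊) := NatIso.isIso_of_isIso_app _
    exact asIso (thetaTrans ρ hbot 𝔊)
  · rintro ⟨M, ⟨e⟩⟩
    exact Presieve.isSheaf_iso J e.symm (fixedPoint_isSheaf ρ hρ hbot J hJ M)
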